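/- The logarithm of z/(e^z - 1) as a formal power series equals the sum over j ≥ 1 of (-1)^{j-1} * (B_j / j) * z^j / j!, where B_j are the Bernoulli numbers. -/

import Mathlib

open PowerSeries

/-- The formal logarithm of a power series `f` (intended for `f` with constant term `1`):
the unique series with constant term `0` whose derivative is `f' / f`. -/
noncomputable def formalLog (f : PowerSeries ℚ) : PowerSeries ℚ :=
  PowerSeries.mk fun n =>
    if n = 0 then 0 else (PowerSeries.coeff (R := ℚ) (n - 1)) (PowerSeries.derivative ℚ f * f⁻¹) / n

/-- The Bernoulli power series `z / (e^z - 1) = ∑_{j ≥ 0} B_j z^j / j!`. -/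
noncomputable def bernoulliPS : PowerSeries ℚ :=
  PowerSeries.mk fun j => bernoulli j / j.factorial

lemma bernoulliPS_eq : bernoulliPS = bernoulliPowerSeries ℚ := by
  ext n
  simp [bernoulliPS, bernoulliPowerSeries, div_eq_mul_inv]

lemma bernoulliPS_mul : bernoulliPS * (exp ℚ - 1) = X := by
  rw [bernoulliPS_eq]; exact bernoulliPowerSeries_mul_exp_sub_one ℚ

lemma constantCoeff_bernoulliPS : constantCoeff bernoulliPS = 1 := by
  simp [bernoulliPS, ← coeff_zero_eq_constantCoeff_apply]

lemma derivative_exp : d⁄dX ℚ (exp ℚ) = exp ℚ := by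
  ext n
  rw [coeff_derivative, coeff_exp, coeff_exp]
  simp only [Algebra.algebraMap_self, RingHom.id_apply]
  field_simp [Nat.factorial_succ]
  rw [Nat.factorial_succ]; push_cast; ring

lemma deriv_identity :
    X * (d⁄dX ℚ bernoulliPS) = (1 - bernoulliPS - X) * bernoulliPS := by
  have h1 : d⁄dX ℚ (bernoulliPS * (exp ℚ - 1)) = (1 : PowerSeries ℚ) := by
    rw [bernoulliPS_mul, derivative_X]
  rw [Derivation.leibniz, map_sub, _root_.derivative_exp, Derivation.map_one_eq_zero, sub_zero,
    smul_eq_mul, smul_eq_mul] at h1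
  -- h1 : bernoulliPS * exp ℚ + (exp ℚ - 1) * d⁄dX ℚ bernoulliPS = 1
  have h2 : bernoulliPS * exp ℚ = bernoulliPS + X := by
    have := bernoulliPS_mul
    rw [mul_sub, mul_one, sub_eq_iff_eq_add] at this
    rw [this]; ring
  have h3 : (exp ℚ - 1) * d⁄dX ℚ bernoulliPS = 1 - bernoulliPS - X := by
    linear_combination h1 - h2
  calc X * (d⁄dX ℚ bernoulliPS) = bernoulliPS * ((exp ℚ - 1) * d⁄dX ℚ bernoulliPS) := by
        rw [← bernoulliPS_mul]; ring
    _ = (1 - bernoulliPS - X) * bernoulliPS := by rw [h3]; ring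

lemma key : X * (d⁄dX ℚ bernoulliPS * bernoulliPS⁻¹) = 1 - bernoulliPS - X := by
  have hc : constantCoeff bernoulliPS ≠ 0 := by
    rw [constantCoeff_bernoulliPS]; norm_num
  calc X * (d⁄dX ℚ bernoulliPS * bernoulliPS⁻¹)
      = (X * d⁄dX ℚ bernoulliPS) * bernoulliPS⁻¹ := by ring
    _ = (1 - bernoulliPS - X) * (bernoulliPS * bernoulliPS⁻¹) := by rw [deriv_identity]; ring
    _ = 1 - bernoulliPS - X := by rw [PowerSeries.mul_inv_cancel _ hc, mul_one]

/-- `log (z / (e^z - 1)) = ∑_{j ≥ 1} (-1)^{j-1} (B_j / j) z^j / j!`. -/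
theorem formalLog_bernoulliPS :
    formalLog bernoulliPS =
      PowerSeries.mk fun j =>
        if j = 0 then 0 else (-1) ^ (j - 1) * (bernoulli j / j) * (1 / j.factorial) := by
  ext n
  rw [formalLog, coeff_mk, coeff_mk]
  cases n with
  | zero => simp
  | succ m =>
    simp only [Nat.succ_ne_zero, if_false, Nat.add_sub_cancel]
    have hcoeff : (coeff m) (d⁄dX ℚ bernoulliPS * bernoulliPS⁻¹)
        = (coeff (m + 1)) (1 - bernoulliPS - X) := by
      rw [← key, coeff_succ_X_mul]
    rw [hcoeff]
    simp only [map_sub, coeff_one, coeff_X, bernoulliPS, coeff_mk, Nat.succ_ne_zero, if_false]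
    cases m with
    | zero => norm_num [bernoulli_one]
    | succ k =>
      rcases Nat.even_or_odd k with he | ho
      · rw [if_neg (by omega), (Even.add_one he).neg_one_pow]
        have hfac : ((k + 1 + 1).factorial : ℚ) ≠ 0 := by
          exact_mod_cast Nat.factorial_ne_zero (k + 1 + 1)
        have hk2 : ((k : ℚ) + 1 + 1) ≠ 0 := by positivity
        push_cast
        field_simp
        ring_nf
      · have hodd : bernoulli (k + 2) = 0 := by
          rw [bernoulli_eq_bernoulli'_of_ne_one (by omega),
            bernoulli'_eq_zero_of_odd (by obtain ⟨m, rfl⟩ := ho; exact ⟨m + 1, by ring⟩) (by omega)]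
        simp [show k + 1 + 1 = k + 2 from rfl, hodd]
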